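/- For any formal power series a(t), b(t) ∈ ℂ[[t]], any integers 0 ≤ s, r ≤ l with r − s ≥ 2, and any 0 ≤ w ≤ r − s − 2, one has the identity Σ_{u=s}^{r−1} (−1)^u C(r−s−1, u−s) · (d^w/dt^w)(a(t)^{l−u} b(t)^u) · a(t)^{l−r−s+u} b(t)^{r+s−u} = 0 in ℂ[[t]]. -/

import Mathlib

open scoped BigOperators
open Polynomial PowerSeries fwdDiff

noncomputable def tDeriv {R : Type*} [CommRing R] (f : PowerSeries R) : PowerSeries R :=
  PowerSeries.mk fun n => ((n + 1 : ℕ) : R) * PowerSeries.coeff (n + 1) f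

lemma tDeriv_eq (f : PowerSeries ℂ) : tDeriv f = d⁄dX ℂ f := by
  ext n
  simp [tDeriv, PowerSeries.coeff_derivative, mul_comm]

lemma fwdDiff_poly_eval (m : ℕ) : ∀ (Q : Polynomial ℂ), Q.natDegree < m →
    (Δ_[(1:ℕ)])^[m] (fun n : ℕ => Q.eval (n : ℂ)) = 0 := by
  induction m with
  | zero => intro Q h; omega
  | succ m ih =>
    intro Q hQ
    rw [Function.iterate_succ_apply]
    have key : Δ_[(1:ℕ)] (fun n : ℕ => Q.eval (n : ℂ))
        = fun n : ℕ => (Q.comp (Polynomial.X + Polynomial.C 1) - Q).eval (n : ℂ) := by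
      funext n
      simp [fwdDiff, eval_comp]
    rw [key]
    set Q' := Q.comp (Polynomial.X + Polynomial.C 1) - Q with hQ'
    rcases eq_or_ne Q' 0 with h0 | h0
    · have : (fun n : ℕ => Q'.eval (n : ℂ)) = (0 : ℕ → ℂ) := by
        funext n; rw [h0]; simp
      rw [this, ← fwdDiff_aux.coe_fwdDiffₗ_pow, map_zero]
    · apply ih
      have hQne : Q ≠ 0 := by rintro rfl; simp [hQ'] at h0
      have hdQ : 1 ≤ Q.natDegree := by
        by_contra hc
        have : Q.natDegree = 0 := by omega
        obtain ⟨c, rfl⟩ := Polynomial.natDegree_eq_zero.mp this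
        simp [hQ'] at h0
      have hlc : (Q.comp (Polynomial.X + Polynomial.C 1)).leadingCoeff = Q.leadingCoeff := by
        rw [leadingCoeff_comp (by rw [natDegree_X_add_C]; exact one_ne_zero),
          leadingCoeff_X_add_C, one_pow, mul_one]
      have hcompne : Q.comp (Polynomial.X + Polynomial.C 1) ≠ 0 := fun h =>
        hQne (leadingCoeff_eq_zero.mp (by rw [← hlc, h, leadingCoeff_zero]))
      have hdeg : (Q.comp (Polynomial.X + Polynomial.C 1)).degree = Q.degree := by
        rw [degree_eq_natDegree hcompne, degree_eq_natDegree hQne, natDegree_comp,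
          natDegree_X_add_C, mul_one]
      have hlt : Q'.degree < Q.degree := by
        have := degree_sub_lt hdeg hcompne hlc
        rwa [hdeg] at this
      have := natDegree_lt_natDegree h0 hlt
      omega

lemma tDeriv_sum {ι : Type*} (s : Finset ι) (f : ι → PowerSeries ℂ) :
    tDeriv (∑ i ∈ s, f i) = ∑ i ∈ s, tDeriv (f i) := by
  simp only [tDeriv_eq]
  exact map_sum (d⁄dX ℂ).toLinearMap f s

lemma tDeriv_smul' (z : ℂ) (f : PowerSeries ℂ) : tDeriv (z • f) = z • tDeriv f := by
  simp only [tDeriv_eq]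
  exact (d⁄dX ℂ).map_smul z f

lemma tDeriv_mul (f g : PowerSeries ℂ) :
    tDeriv (f * g) = tDeriv f * g + f * tDeriv g := by
  simp only [tDeriv_eq]
  rw [Derivation.leibniz]
  rw [smul_eq_mul, smul_eq_mul]
  ring

lemma tDeriv_pow (f : PowerSeries ℂ) (n : ℕ) :
    tDeriv (f ^ n) = n • (f ^ (n - 1) * tDeriv f) := by
  simp only [tDeriv_eq]
  rw [Derivation.leibniz_pow]
  rw [smul_eq_mul]

lemma rep_lemma (a b : PowerSeries ℂ) (l : ℕ) (w : ℕ) :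
    ∃ (ι : Type) (_ : Fintype ι) (P : ι → Polynomial ℤ) (α β : ι → ℕ) (c : ι → PowerSeries ℂ),
      (∀ i, (P i).natDegree ≤ w) ∧
      (∀ i (u : ℕ), u < l → (l : ℤ) < (u : ℤ) + α i → (P i).eval (u : ℤ) = 0) ∧
      (∀ i (u : ℕ), u < l → (u : ℤ) < β i → (P i).eval (u : ℤ) = 0) ∧
      ∀ u : ℕ, u < l → tDeriv^[w] (a ^ (l - u) * b ^ u) =
        ∑ i, (((P i).eval (u : ℤ) : ℤ) : ℂ) • (c i * a ^ (l - u - α i) * b ^ (u - β i)) := by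
  induction w with
  | zero =>
    refine ⟨Unit, inferInstance, fun _ => 1, fun _ => 0, fun _ => 0, fun _ => 1, ?_, ?_, ?_, ?_⟩
    · intro i; simp
    · intro i u hu h; exfalso; push_cast at h; omega
    · intro i u hu h; exfalso; push_cast at h; omega
    · intro u hu
      simp [mul_comm]
  | succ w ih =>
    obtain ⟨ι, _, P, α, β, c, hdeg, hα, hβ, hsum⟩ := ih
    refine ⟨ι ⊕ (ι ⊕ ι), inferInstance,
      Sum.elim P (Sum.elim (fun i => P i * (Polynomial.C ((l : ℤ) - α i) - Polynomial.X))
        (fun i => P i * (Polynomial.X - Polynomial.C (β i : ℤ)))),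
      Sum.elim α (Sum.elim (fun i => α i + 1) α),
      Sum.elim β (Sum.elim β (fun i => β i + 1)),
      Sum.elim (fun i => tDeriv (c i)) (Sum.elim (fun i => c i * tDeriv a)
        (fun i => c i * tDeriv b)),
      ?_, ?_, ?_, ?_⟩
    · rintro (i | i | i)
      · exact le_trans (hdeg i) (Nat.le_succ w)
      · refine le_trans Polynomial.natDegree_mul_le ?_
        have h1 : (Polynomial.C ((l : ℤ) - α i) - Polynomial.X).natDegree ≤ 1 := by
          rw [show Polynomial.C ((l : ℤ) - α i) - Polynomial.X
              = -(Polynomial.X - Polynomial.C ((l : ℤ) - α i)) by ring,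
            Polynomial.natDegree_neg, Polynomial.natDegree_X_sub_C]
        have := hdeg i; omega
      · refine le_trans Polynomial.natDegree_mul_le ?_
        have h1 : (Polynomial.X - Polynomial.C ((β i : ℕ) : ℤ)).natDegree ≤ 1 := by
          rw [Polynomial.natDegree_X_sub_C]
        have := hdeg i; omega
    · rintro (i | i | i) u hu h
      · exact hα i u hu h
      · simp only [Sum.elim_inl, Sum.elim_inr] at h ⊢
        rw [Polynomial.eval_mul]
        rcases lt_or_ge (l : ℤ) ((u : ℤ) + α i) with h' | h'
        · rw [hα i u hu h', zero_mul]
        · have h2 : (u : ℤ) + α i = l := by push_cast at h h' ⊢; omega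
          simp only [Polynomial.eval_sub, Polynomial.eval_C, Polynomial.eval_X]
          rw [← h2]; ring
      · simp only [Sum.elim_inl, Sum.elim_inr] at h ⊢
        rw [Polynomial.eval_mul, hα i u hu h, zero_mul]
    · rintro (i | i | i) u hu h
      · exact hβ i u hu h
      · simp only [Sum.elim_inl, Sum.elim_inr] at h ⊢
        rw [Polynomial.eval_mul, hβ i u hu h, zero_mul]
      · simp only [Sum.elim_inl, Sum.elim_inr] at h ⊢
        rw [Polynomial.eval_mul]
        rcases lt_or_ge ((u : ℤ)) (β i : ℤ) with h' | h'
        · rw [hβ i u hu h', zero_mul]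
        · have h2 : (u : ℤ) = β i := by push_cast at h h' ⊢; omega
          simp only [Polynomial.eval_sub, Polynomial.eval_C, Polynomial.eval_X]
          rw [h2]; ring
    · intro u hu
      rw [Function.iterate_succ_apply', hsum u hu, tDeriv_sum]
      have hterm : ∀ i : ι,
          tDeriv ((((P i).eval (u : ℤ) : ℤ) : ℂ) • (c i * a ^ (l - u - α i) * b ^ (u - β i)))
          = (((P i).eval (u : ℤ) : ℤ) : ℂ) • (tDeriv (c i) * a ^ (l - u - α i) * b ^ (u - β i))
            + ((((P i * (Polynomial.C ((l : ℤ) - α i) - Polynomial.X)).eval (u : ℤ) : ℤ) : ℂ))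
              • (c i * tDeriv a * a ^ (l - u - (α i + 1)) * b ^ (u - β i))
            + ((((P i * (Polynomial.X - Polynomial.C (β i : ℤ))).eval (u : ℤ) : ℤ) : ℂ))
              • (c i * tDeriv b * a ^ (l - u - α i) * b ^ (u - (β i + 1))) := by
        intro i
        rw [tDeriv_smul', tDeriv_mul, tDeriv_mul, tDeriv_pow, tDeriv_pow]
        set e : ℂ := (((P i).eval (u : ℤ) : ℤ) : ℂ) with he
        have e2 : (((P i * (Polynomial.C ((l : ℤ) - α i) - Polynomial.X)).eval (u : ℤ) : ℤ) : ℂ)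
            = e * ((l - u - α i : ℕ) : ℂ) := by
          rcases lt_or_ge (l : ℤ) ((u : ℤ) + α i) with h' | h'
          · have h0 := hα i u hu h'
            rw [Polynomial.eval_mul, h0, he, h0]
            simp
          · rw [Polynomial.eval_mul]
            have : ((l - u - α i : ℕ) : ℂ) = ((l : ℂ) - u - α i) := by
              have h1 : u ≤ l := le_of_lt hu
              have h2 : α i ≤ l - u := by omega
              push_cast [Nat.cast_sub h2, Nat.cast_sub h1]
              ring
            rw [this]
            simp only [Polynomial.eval_sub, Polynomial.eval_C, Polynomial.eval_X]
            push_cast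
            ring
        have e3 : (((P i * (Polynomial.X - Polynomial.C (β i : ℤ))).eval (u : ℤ) : ℤ) : ℂ)
            = e * ((u - β i : ℕ) : ℂ) := by
          rcases lt_or_ge ((u : ℤ)) (β i : ℤ) with h' | h'
          · have h0 := hβ i u hu h'
            rw [Polynomial.eval_mul, h0, he, h0]
            simp
          · rw [Polynomial.eval_mul]
            have hb : β i ≤ u := by exact_mod_cast h'
            have : ((u - β i : ℕ) : ℂ) = ((u : ℂ) - β i) := by
              push_cast [Nat.cast_sub hb]; ring
            rw [this]
            simp only [Polynomial.eval_sub, Polynomial.eval_C, Polynomial.eval_X]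
            push_cast
            ring
        rw [e2, e3]
        rw [show l - u - (α i + 1) = l - u - α i - 1 by omega,
          show u - (β i + 1) = u - β i - 1 by omega]
        set p := l - u - α i
        set q := u - β i
        simp only [← Nat.cast_smul_eq_nsmul ℂ, PowerSeries.smul_eq_C_mul, map_mul]
        ring
      rw [Finset.sum_congr rfl (fun i _ => hterm i)]
      rw [Finset.sum_add_distrib, Finset.sum_add_distrib]
      rw [Fintype.sum_sum_type, Fintype.sum_sum_type]
      simp only [Sum.elim_inl, Sum.elim_inr]
      abel

lemma alt_shift (m s : ℕ) (Q : Polynomial ℂ) (h : Q.natDegree < m) :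
    ∑ j ∈ Finset.range (m + 1),
      ((-1 : ℂ) ^ (s + j) * (m.choose j : ℂ)) * Q.eval ((s + j : ℕ) : ℂ) = 0 := by
  set R := Q.comp (Polynomial.X + Polynomial.C (s : ℂ)) with hR
  have hdR : R.natDegree < m := by
    rw [hR, natDegree_comp, natDegree_X_add_C, mul_one]; exact h
  have hev : ∀ j : ℕ, Q.eval ((s + j : ℕ) : ℂ) = R.eval (j : ℂ) := by
    intro j
    rw [hR, eval_comp]
    congr 1
    simp
    push_cast
    ring
  have h0 := congrFun (fwdDiff_poly_eval m R hdR) 0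
  rw [fwdDiff_iter_eq_sum_shift] at h0
  simp only [zero_add, smul_eq_mul, mul_one, Pi.zero_apply, zsmul_eq_mul] at h0
  push_cast at h0
  calc ∑ j ∈ Finset.range (m + 1),
        ((-1 : ℂ) ^ (s + j) * (m.choose j : ℂ)) * Q.eval ((s + j : ℕ) : ℂ)
      = ∑ j ∈ Finset.range (m + 1),
        (-1 : ℂ) ^ (s + m) * (((-1 : ℂ) ^ (m - j) * (m.choose j : ℂ)) * R.eval (j : ℂ)) := by
        refine Finset.sum_congr rfl ?_
        intro j hj
        rw [Finset.mem_range] at hj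
        rw [hev j]
        have hsign : (-1 : ℂ) ^ (s + m) * (-1 : ℂ) ^ (m - j) = (-1 : ℂ) ^ (s + j) := by
          rw [← pow_add]
          rw [show s + m + (m - j) = s + j + 2 * (m - j) from by omega]
          rw [pow_add (-1 : ℂ) (s + j) (2 * (m - j)), pow_mul]
          norm_num
        rw [← hsign]
        ring
    _ = (-1 : ℂ) ^ (s + m) * ∑ j ∈ Finset.range (m + 1),
          ((-1 : ℂ) ^ (m - j) * (m.choose j : ℂ)) * R.eval (j : ℂ) := by
        rw [Finset.mul_sum]
    _ = 0 := by
        rw [show (∑ j ∈ Finset.range (m + 1),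
            ((-1 : ℂ) ^ (m - j) * (m.choose j : ℂ)) * R.eval (j : ℂ)) = 0 from by
          rw [← h0]
        ]
        ring

/-- for any formal power series `a(t), b(t) ∈ ℂ[[t]]`, any
`0 ≤ s, r ≤ l` with `r - s ≥ 2` and any `0 ≤ w ≤ r - s - 2`, one has
`Σ_{u=s}^{r-1} (-1)^u C(r-s-1, u-s) (d^w/dt^w)(a^{l-u} b^u) a^{l-r-s+u} b^{r+s-u} = 0`.
(Here the exponent `l - r - s + u` is written as `l - (r + s - u)`, which is the same
nonnegative integer since `s ≤ u ≤ r - 1 ≤ l - 1`.) -/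
theorem veronese_relation_vanishes (l : ℕ) (hl : 1 ≤ l) (a b : PowerSeries ℂ)
    (s r w : ℕ) (hr : r ≤ l) (hsr : s + 2 ≤ r) (hw : w + s + 2 ≤ r) :
    ∑ u ∈ Finset.Icc s (r - 1),
      ((-1 : ℂ) ^ u * ((r - s - 1).choose (u - s) : ℂ)) •
        (tDeriv^[w] (a ^ (l - u) * b ^ u) * (a ^ (l - (r + s - u)) * b ^ (r + s - u))) = 0 := by
  obtain ⟨ι, _, P, α, β, c, hdeg, hα, hβ, hsum⟩ := rep_lemma a b l w
  set m := r - 1 - s with hm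
  have key : ∀ u ∈ Finset.Icc s (r - 1),
      ((-1 : ℂ) ^ u * ((r - s - 1).choose (u - s) : ℂ)) •
        (tDeriv^[w] (a ^ (l - u) * b ^ u) * (a ^ (l - (r + s - u)) * b ^ (r + s - u)))
      = ∑ i, (((-1 : ℂ) ^ u * ((r - s - 1).choose (u - s) : ℂ)) * (((P i).eval (u : ℤ) : ℤ) : ℂ)) •
          (c i * a ^ (2 * l - (r + s) - α i) * b ^ ((r + s) - β i)) := by
    intro u hu
    rw [Finset.mem_Icc] at hu
    have hul : u < l := by omega
    rw [hsum u hul, Finset.sum_mul, Finset.smul_sum]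
    refine Finset.sum_congr rfl ?_
    intro i _
    rw [smul_mul_assoc, smul_smul]
    rcases lt_or_ge (l : ℤ) ((u : ℤ) + α i) with h' | h'
    · rw [hα i u hul h']; simp
    rcases lt_or_ge ((u : ℤ)) ((β i : ℤ)) with h'' | h''
    · rw [hβ i u hul h'']; simp
    have hαl : u + α i ≤ l := by exact_mod_cast h'
    have hβu : β i ≤ u := by exact_mod_cast h''
    congr 1
    rw [show (c i * a ^ (l - u - α i) * b ^ (u - β i)) *
        (a ^ (l - (r + s - u)) * b ^ (r + s - u))
        = c i * (a ^ (l - u - α i) * a ^ (l - (r + s - u))) *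
          (b ^ (u - β i) * b ^ (r + s - u)) from by ring,
      ← pow_add, ← pow_add,
      show (l - u - α i) + (l - (r + s - u)) = 2 * l - (r + s) - α i from by omega,
      show (u - β i) + (r + s - u) = (r + s) - β i from by omega]
  have inner : ∀ i : ι, ∑ u ∈ Finset.Icc s (r - 1),
      (((-1 : ℂ) ^ u * ((r - s - 1).choose (u - s) : ℂ)) * (((P i).eval (u : ℤ) : ℤ) : ℂ)) = 0 := by
    intro i
    set Q := (P i).map (Int.castRingHom ℂ) with hQ
    have hcast : ∀ n : ℕ, (((P i).eval (n : ℤ) : ℤ) : ℂ) = Q.eval ((n : ℕ) : ℂ) := by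
      intro n
      rw [hQ, Polynomial.eval_map, Polynomial.eval₂_at_natCast]
      rfl
    have hdQ : Q.natDegree < m := by
      have h1 : Q.natDegree ≤ (P i).natDegree := Polynomial.natDegree_map_le
      have h2 := hdeg i
      omega
    rw [show Finset.Icc s (r - 1) = Finset.Ico s r from by
      rw [← Finset.Ico_add_one_right_eq_Icc]; congr 1; omega]
    rw [Finset.sum_Ico_eq_sum_range, show r - s = m + 1 from by omega]
    rw [← alt_shift m s Q hdQ]
    refine Finset.sum_congr rfl ?_
    intro j hj
    rw [hcast (s + j), show (s + j) - s = j from by omega, Nat.add_sub_cancel]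
  calc ∑ u ∈ Finset.Icc s (r - 1),
      ((-1 : ℂ) ^ u * ((r - s - 1).choose (u - s) : ℂ)) •
        (tDeriv^[w] (a ^ (l - u) * b ^ u) * (a ^ (l - (r + s - u)) * b ^ (r + s - u)))
      = ∑ u ∈ Finset.Icc s (r - 1), ∑ i,
          (((-1 : ℂ) ^ u * ((r - s - 1).choose (u - s) : ℂ)) * (((P i).eval (u : ℤ) : ℤ) : ℂ)) •
          (c i * a ^ (2 * l - (r + s) - α i) * b ^ ((r + s) - β i)) :=
        Finset.sum_congr rfl key
    _ = ∑ i, ∑ u ∈ Finset.Icc s (r - 1),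
          (((-1 : ℂ) ^ u * ((r - s - 1).choose (u - s) : ℂ)) * (((P i).eval (u : ℤ) : ℤ) : ℂ)) •
          (c i * a ^ (2 * l - (r + s) - α i) * b ^ ((r + s) - β i)) := Finset.sum_comm
    _ = 0 := by
        refine Finset.sum_eq_zero ?_
        intro i _
        rw [← Finset.sum_smul, inner i, zero_smul]
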